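/- Shortness of the Jensen–Shannon distance under deterministic post-processing: for any probability vectors p, q on a finite nonempty type X and any function f : X → Y into a finite nonempty type Y, D_JSD(f_*p, f_*q) ≤ D_JSD(p,q), where the pushforward is defined by (f_*p)(y) = ∑_{x : f(x)=y} p(x). -/

import Mathlib

open Finset Matrix

noncomputable section

/-- A probability vector on a finite type: nonnegative entries summing to 1. -/
def IsProbVec {X : Type*} [Fintype X] (p : X → ℝ) : Prop :=
  (∀ x, 0 ≤ p x) ∧ ∑ x, p x = 1

/-- Kullback–Leibler divergence, with the convention that terms with `p x = 0`
contribute `0`. -/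
noncomputable def KL {X : Type*} [Fintype X] (p q : X → ℝ) : ℝ :=
  ∑ x, if p x = 0 then 0 else p x * Real.log (p x / q x)

/-- Jensen–Shannon distance. -/
noncomputable def JSD {X : Type*} [Fintype X] (p q : X → ℝ) : ℝ :=
  Real.sqrt ((1 / 2) * KL p (fun x => (p x + q x) / 2)
    + (1 / 2) * KL q (fun x => (p x + q x) / 2))

/-- A column-stochastic matrix: nonnegative entries, every column sums to 1. -/
def IsColStoch {Y X : Type*} [Fintype Y] [Fintype X] (M : Matrix Y X ℝ) : Prop :=
  (∀ y x, 0 ≤ M y x) ∧ ∀ x, ∑ y, M y x = 1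

/-- The sup-JSD distance between two matrices of the same shape:
the maximum over columns of the JSD between corresponding columns. -/
noncomputable def supJSD {Y X : Type*} [Fintype Y] [Fintype X] [Nonempty X]
    (M N : Matrix Y X ℝ) : ℝ :=
  Finset.univ.sup' Finset.univ_nonempty fun x => JSD (fun y => M y x) (fun y => N y x)

/-- An abstraction matrix: entries in {0,1}, every column contains exactly one 1,
and every row contains at least one 1. -/
def IsAbsMatrix {N M : Type*} [Fintype N] [Fintype M] (α : Matrix N M ℝ) : Prop :=
  (∀ j i, α j i = 0 ∨ α j i = 1) ∧ (∀ i, ∃! j, α j i = 1) ∧ (∀ j, ∃ i, α j i = 1)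

/-- The pseudo-inverse `α⁺ = αᵀ·(α·αᵀ)⁻¹` of an abstraction matrix. -/
noncomputable def pinv {N M : Type*} [Fintype N] [Fintype M] [DecidableEq N]
    (α : Matrix N M ℝ) : Matrix M N ℝ :=
  αᵀ * (α * αᵀ)⁻¹

/-- Pushforward of a probability vector along a function. -/
noncomputable def pushforward {X Y : Type*} [Fintype X] [Fintype Y] [DecidableEq Y]
    (f : X → Y) (p : X → ℝ) : Y → ℝ :=
  fun y => ∑ x ∈ Finset.univ.filter (fun x => f x = y), p x


/-- Log-sum inequality on a finset. -/
lemma log_sum_ineq {X : Type*} (s : Finset X) (a b : X → ℝ)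
    (ha : ∀ x ∈ s, 0 ≤ a x) (hb : ∀ x ∈ s, 0 ≤ b x)
    (hab : ∀ x ∈ s, a x ≠ 0 → 0 < b x) :
    (∑ x ∈ s, a x) * Real.log ((∑ x ∈ s, a x) / (∑ x ∈ s, b x))
      ≤ ∑ x ∈ s, a x * Real.log (a x / b x) := by
  set A := ∑ x ∈ s, a x with hA
  set B := ∑ x ∈ s, b x with hBdef
  have hb0a : ∀ x ∈ s, b x = 0 → a x = 0 := fun x hx h => by
    by_contra h'; exact absurd h (hab x hx h').ne'
  rcases eq_or_lt_of_le (Finset.sum_nonneg hb : (0:ℝ) ≤ B) with hB | hB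
  · have hb0 : ∀ x ∈ s, b x = 0 := (Finset.sum_eq_zero_iff_of_nonneg hb).mp hB.symm
    have hA0 : A = 0 := Finset.sum_eq_zero fun x hx => hb0a x hx (hb0 x hx)
    rw [hA0, zero_mul]
    exact Finset.sum_nonneg fun x hx => by
      rw [hb0a x hx (hb0 x hx)]; simp
  · have hJ := Real.convexOn_mul_log.map_sum_le (t := s)
      (w := fun x => b x / B) (p := fun x => if b x = 0 then 0 else a x / b x)
      (fun x hx => div_nonneg (hb x hx) hB.le)
      (by rw [← Finset.sum_div, ← hBdef, div_self hB.ne'])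
      (fun x hx => by
        split_ifs with h
        · exact Set.self_mem_Ici
        · exact div_nonneg (ha x hx) (hb x hx))
    have h1 : ∑ x ∈ s, (b x / B) • (if b x = 0 then 0 else a x / b x) = A / B := by
      rw [hA, Finset.sum_div]
      refine Finset.sum_congr rfl fun x hx => ?_
      split_ifs with h
      · rw [hb0a x hx h]; simp
      · rw [smul_eq_mul]; field_simp
    have h2 : ∑ x ∈ s, (b x / B) •
        ((if b x = 0 then 0 else a x / b x) * Real.log (if b x = 0 then 0 else a x / b x))
        = (∑ x ∈ s, a x * Real.log (a x / b x)) / B := by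
      rw [Finset.sum_div]
      refine Finset.sum_congr rfl fun x hx => ?_
      split_ifs with h
      · rw [hb0a x hx h]; simp
      · rw [smul_eq_mul]; field_simp
    rw [h1, h2] at hJ
    calc A * Real.log (A / B) = ((A / B) * Real.log (A / B)) * B := by
          have hB0 : B ≠ 0 := hB.ne'; field_simp
      _ ≤ ((∑ x ∈ s, a x * Real.log (a x / b x)) / B) * B := by
          exact mul_le_mul_of_nonneg_right hJ hB.le
      _ = ∑ x ∈ s, a x * Real.log (a x / b x) := by have hB0 : B ≠ 0 := hB.ne'; field_simp

lemma KL_eq {X : Type*} [Fintype X] (p q : X → ℝ) :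
    KL p q = ∑ x, p x * Real.log (p x / q x) := by
  unfold KL
  refine Finset.sum_congr rfl fun x _ => ?_
  split_ifs with h
  · rw [h, zero_mul]
  · rfl

/-- Data-processing for KL along pushforward. -/
lemma KL_pushforward_le {X Y : Type*} [Fintype X] [Fintype Y] [DecidableEq Y]
    (f : X → Y) (a b : X → ℝ) (ha : ∀ x, 0 ≤ a x) (hb : ∀ x, 0 ≤ b x)
    (hab : ∀ x, a x ≠ 0 → 0 < b x) :
    KL (pushforward f a) (pushforward f b) ≤ KL a b := by
  rw [KL_eq, KL_eq]
  rw [← Finset.sum_fiberwise (g := f) (f := fun x => a x * Real.log (a x / b x))]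
  refine Finset.sum_le_sum fun y _ => ?_
  exact log_sum_ineq _ a b (fun x _ => ha x) (fun x _ => hb x) (fun x _ => hab x)

theorem jsd_shortness_pushforward {X Y : Type*} [Fintype X] [Nonempty X]
    [Fintype Y] [Nonempty Y] [DecidableEq Y]
    (f : X → Y) (p q : X → ℝ) (hp : IsProbVec p) (hq : IsProbVec q) :
    JSD (pushforward f p) (pushforward f q) ≤ JSD p q := by
  set m : X → ℝ := fun x => (p x + q x) / 2 with hm
  have hpush : (fun y => (pushforward f p y + pushforward f q y) / 2)
      = pushforward f m := by
    funext y
    simp only [pushforward, hm, ← Finset.sum_add_distrib, Finset.sum_div]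
  have hmp : ∀ x, p x ≠ 0 → 0 < m x := fun x h => by
    have := (hp.1 x).lt_of_ne' h
    have := hq.1 x
    simp only [hm]; positivity
  have hmq : ∀ x, q x ≠ 0 → 0 < m x := fun x h => by
    have := (hq.1 x).lt_of_ne' h
    have := hp.1 x
    simp only [hm]; positivity
  have hmnn : ∀ x, 0 ≤ m x := fun x => by
    have := hp.1 x; have := hq.1 x; simp only [hm]; positivity
  unfold JSD
  rw [hpush]
  apply Real.sqrt_le_sqrt
  have h1 := KL_pushforward_le f p m hp.1 hmnn hmp
  have h2 := KL_pushforward_le f q m hq.1 hmnn hmq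
  linarith
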